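/- Let n ≥ 2 be an integer and λ > 1 a real number. Then 2^{2n−1} n(n−1)(2n−1) λⁿ (λ−1) · ∫₀^∞ y^{2n−3}(2y+1)/(2λy + λ − 1)^{2n+1} dy = (n−1) λ^{1−n}/(λ−1) + λ^{2−n}/(λ−1)², the integral being absolutely convergent. -/

import Mathlib

open MeasureTheory

set_option maxHeartbeats 1000000
set_option maxRecDepth 4000

open MeasureTheory Set Filter Topology

lemma aux14 (m : ℕ) (a c : ℝ) (ha : 0 < a) (hc : 0 < c) :
    IntegrableOn (fun y => y ^ (2*m+1) * (2*y+1) / (a*y+c) ^ (2*m+5)) (Ioi (0:ℝ)) volume ∧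
    ∫ y in Ioi (0:ℝ), y ^ (2*m+1) * (2*y+1) / (a*y+c) ^ (2*m+5)
      = (2*a + (4*(m:ℝ)+4)*c) /
          ((2*(m:ℝ)+2)*(2*(m:ℝ)+3)*(2*(m:ℝ)+4)*c^3*a^(2*m+3)) := by
  set M : ℝ := (m : ℝ) with hM
  have hM0 : 0 ≤ M := Nat.cast_nonneg m
  set K : ℝ := (2*M+2)*(2*M+3)*(2*M+4)*c^3 with hK
  have hKpos : 0 < K := by positivity
  set g : ℝ → ℝ := fun y =>
    ((2*M+3)*(2*M+4)*c^2*y^(2*m+2) + 2*(2*M+4)*c*(a+(2*M+2)*c)*y^(2*m+3)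
      + 2*a*(a+(2*M+2)*c)*y^(2*m+4)) / (K * (a*y+c)^(2*m+4)) with hg
  set f : ℝ → ℝ := fun y => y ^ (2*m+1) * (2*y+1) / (a*y+c) ^ (2*m+5) with hf
  have hderiv : ∀ x ∈ Ici (0:ℝ), HasDerivAt g (f x) x := by
    intro x hx
    have hx0 : (0:ℝ) ≤ x := hx
    have ht : 0 < a*x+c := by positivity
    have e1 : (2*m+2-1) = 2*m+1 := by omega
    have e2 : (2*m+3-1) = 2*m+2 := by omega
    have e3 : (2*m+4-1) = 2*m+3 := by omega
    have hq : HasDerivAt (fun y : ℝ =>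
        (2*M+3)*(2*M+4)*c^2*y^(2*m+2) + 2*(2*M+4)*c*(a+(2*M+2)*c)*y^(2*m+3)
          + 2*a*(a+(2*M+2)*c)*y^(2*m+4))
        ((2*M+3)*(2*M+4)*c^2*((2*M+2)*x^(2*m+1))
          + 2*(2*M+4)*c*(a+(2*M+2)*c)*((2*M+3)*x^(2*m+2))
          + 2*a*(a+(2*M+2)*c)*((2*M+4)*x^(2*m+3))) x := by
      have p1 : HasDerivAt (fun y : ℝ => y^(2*m+2)) ((2*M+2)*x^(2*m+1)) x := by
        have := hasDerivAt_pow (2*m+2) x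
        rw [e1] at this
        convert this using 1
        · rfl
        push_cast [hM]; ring
      have p2 : HasDerivAt (fun y : ℝ => y^(2*m+3)) ((2*M+3)*x^(2*m+2)) x := by
        have := hasDerivAt_pow (2*m+3) x
        rw [e2] at this
        convert this using 1
        · rfl
        push_cast [hM]; ring
      have p3 : HasDerivAt (fun y : ℝ => y^(2*m+4)) ((2*M+4)*x^(2*m+3)) x := by
        have := hasDerivAt_pow (2*m+4) x
        rw [e3] at this
        convert this using 1
        · rfl
        push_cast [hM]; ring
      exact ((p1.const_mul _).add (p2.const_mul _)).add (p3.const_mul _)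
    have hlin : HasDerivAt (fun y : ℝ => a*y+c) a x := by
      simpa using ((hasDerivAt_id x).const_mul a).add_const c
    have hd : HasDerivAt (fun y : ℝ => K * (a*y+c)^(2*m+4))
        (K * ((2*M+4) * (a*x+c)^(2*m+3) * a)) x := by
      have := (hlin.pow (2*m+4)).const_mul K
      rw [e3] at this
      convert this using 1
      · rfl
      · rfl
      · rfl
      push_cast [hM]; ring
    have hdne : K * (a*x+c)^(2*m+4) ≠ 0 := by positivity
    have hdd := hq.div hd hdne
    have key : ((2*M+3)*(2*M+4)*c^2*((2*M+2)*x^(2*m+1))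
          + 2*(2*M+4)*c*(a+(2*M+2)*c)*((2*M+3)*x^(2*m+2))
          + 2*a*(a+(2*M+2)*c)*((2*M+4)*x^(2*m+3))) * (a*x+c)
        - (2*M+4)*a*((2*M+3)*(2*M+4)*c^2*x^(2*m+2) + 2*(2*M+4)*c*(a+(2*M+2)*c)*x^(2*m+3)
          + 2*a*(a+(2*M+2)*c)*x^(2*m+4))
        = K * (x^(2*m+1)*(2*x+1)) := by
      rw [hK]; ring
    have num_eq : ((2*M+3)*(2*M+4)*c^2*((2*M+2)*x^(2*m+1))
          + 2*(2*M+4)*c*(a+(2*M+2)*c)*((2*M+3)*x^(2*m+2))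
          + 2*a*(a+(2*M+2)*c)*((2*M+4)*x^(2*m+3))) * (K * (a*x+c)^(2*m+4))
        - ((2*M+3)*(2*M+4)*c^2*x^(2*m+2) + 2*(2*M+4)*c*(a+(2*M+2)*c)*x^(2*m+3)
          + 2*a*(a+(2*M+2)*c)*x^(2*m+4)) * (K * ((2*M+4) * (a*x+c)^(2*m+3) * a))
        = (K^2 * (a*x+c)^(2*m+3)) * (x^(2*m+1)*(2*x+1)) := by
      rw [show 2*m+4 = (2*m+3)+1 by omega, pow_succ]
      linear_combination (K * (a*x+c)^(2*m+3)) * key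
    have den_eq : (K * (a*x+c)^(2*m+4))^2 = (K^2 * (a*x+c)^(2*m+3)) * (a*x+c)^(2*m+5) := by
      ring
    have hcne : K^2 * (a*x+c)^(2*m+3) ≠ 0 := by positivity
    have hEq : (((2*M+3)*(2*M+4)*c^2*((2*M+2)*x^(2*m+1))
          + 2*(2*M+4)*c*(a+(2*M+2)*c)*((2*M+3)*x^(2*m+2))
          + 2*a*(a+(2*M+2)*c)*((2*M+4)*x^(2*m+3))) * (K * (a*x+c)^(2*m+4))
        - ((2*M+3)*(2*M+4)*c^2*x^(2*m+2) + 2*(2*M+4)*c*(a+(2*M+2)*c)*x^(2*m+3)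
          + 2*a*(a+(2*M+2)*c)*x^(2*m+4)) * (K * ((2*M+4) * (a*x+c)^(2*m+3) * a)))
        / (K * (a*x+c)^(2*m+4))^2 = f x := by
      rw [num_eq, den_eq, mul_div_mul_left _ _ hcne]
    rwa [hEq] at hdd
  have hnonneg : ∀ x ∈ Ioi (0:ℝ), 0 ≤ f x := by
    intro x hx
    have hx0 : (0:ℝ) < x := hx
    have ht : 0 < a*x+c := by positivity
    rw [hf]
    positivity
  set L : ℝ := (2*a + (4*M+4)*c) / ((2*M+2)*(2*M+3)*(2*M+4)*c^3*a^(2*m+3)) with hL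
  have htend : Tendsto g atTop (𝓝 L) := by
    set h : ℝ → ℝ := fun s =>
      ((2*M+3)*(2*M+4)*c^2*s^2 + 2*(2*M+4)*c*(a+(2*M+2)*c)*s
        + 2*a*(a+(2*M+2)*c)) / (K * (a + c*s)^(2*m+4)) with hh
    have hcont : ContinuousAt h 0 := by
      apply ContinuousAt.div
      · fun_prop
      · fun_prop
      · simp only [mul_zero, add_zero]; positivity
    have hval : h 0 = L := by
      rw [hh, hL, hK]
      simp only [mul_zero, add_zero, zero_pow, ne_eq]
      norm_num
      rw [show 2*m+4 = (2*m+3)+1 by omega, pow_succ,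
        div_eq_div_iff (by positivity) (by positivity)]
      ring
    have hcomp : Tendsto (fun y : ℝ => h y⁻¹) atTop (𝓝 L) := by
      rw [← hval]
      exact hcont.tendsto.comp tendsto_inv_atTop_zero
    refine hcomp.congr' ?_
    filter_upwards [eventually_gt_atTop (0:ℝ)] with y hy
    have hyne : y ≠ 0 := ne_of_gt hy
    have hy4 : (y:ℝ)^(2*m+4) ≠ 0 := pow_ne_zero _ hyne
    have e : a + c*y⁻¹ = (a*y+c) * y⁻¹ := by field_simp
    have u1 : ((y:ℝ)⁻¹)^2 * y^(2*m+4) = y^(2*m+2) := by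
      rw [show 2*m+4 = 2+(2*m+2) by omega, pow_add, ← mul_assoc, ← mul_pow,
        inv_mul_cancel₀ hyne, one_pow, one_mul]
    have u2 : (y:ℝ)⁻¹ * y^(2*m+4) = y^(2*m+3) := by
      rw [show 2*m+4 = 1+(2*m+3) by omega, pow_add, ← mul_assoc, pow_one,
        inv_mul_cancel₀ hyne, one_mul]
    have u3 : ((y:ℝ)⁻¹)^(2*m+4) * y^(2*m+4) = 1 := by
      rw [← mul_pow, inv_mul_cancel₀ hyne, one_pow]
    have hnum : ((2*M+3)*(2*M+4)*c^2*(y⁻¹)^2 + 2*(2*M+4)*c*(a+(2*M+2)*c)*y⁻¹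
        + 2*a*(a+(2*M+2)*c)) * y^(2*m+4)
        = (2*M+3)*(2*M+4)*c^2*y^(2*m+2) + 2*(2*M+4)*c*(a+(2*M+2)*c)*y^(2*m+3)
          + 2*a*(a+(2*M+2)*c)*y^(2*m+4) := by
      rw [add_mul, add_mul, mul_assoc ((2*M+3)*(2*M+4)*c^2), u1,
        mul_assoc (2*(2*M+4)*c*(a+(2*M+2)*c)), u2]
    have hden : (K*(a + c*y⁻¹)^(2*m+4)) * y^(2*m+4) = K*(a*y+c)^(2*m+4) := by
      rw [e, mul_pow, show K * ((a*y+c)^(2*m+4) * (y⁻¹)^(2*m+4)) * y^(2*m+4)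
        = K * (a*y+c)^(2*m+4) * ((y⁻¹)^(2*m+4) * y^(2*m+4)) from by ring, u3, mul_one]
    simp only [hh, hg]
    calc ((2*M+3)*(2*M+4)*c^2*(y⁻¹)^2 + 2*(2*M+4)*c*(a+(2*M+2)*c)*y⁻¹
          + 2*a*(a+(2*M+2)*c)) / (K * (a + c*y⁻¹)^(2*m+4))
        = ((2*M+3)*(2*M+4)*c^2*(y⁻¹)^2 + 2*(2*M+4)*c*(a+(2*M+2)*c)*y⁻¹
          + 2*a*(a+(2*M+2)*c)) * y^(2*m+4) / ((K * (a + c*y⁻¹)^(2*m+4)) * y^(2*m+4)) :=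
          (mul_div_mul_right _ _ hy4).symm
      _ = _ := by rw [hnum, hden]
  refine ⟨?_, ?_⟩
  · exact integrableOn_Ioi_deriv_of_nonneg' hderiv hnonneg htend
  · rw [MeasureTheory.integral_Ioi_of_hasDerivAt_of_nonneg' hderiv hnonneg htend]
    have hg0 : g 0 = 0 := by
      rw [hg]
      norm_num
    rw [hg0, sub_zero]


/-- Let `n ≥ 2` be an integer and `λ > 1` real.  Then
`2^{2n-1} n (n-1) (2n-1) λⁿ (λ-1) ∫₀^∞ y^{2n-3}(2y+1)/(2λy + λ - 1)^{2n+1} dy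
  = (n-1) λ^{1-n}/(λ-1) + λ^{2-n}/(λ-1)²`, the integral being absolutely convergent. -/
theorem stmt14 (n : ℕ) (hn : 2 ≤ n) (lam : ℝ) (hlam : 1 < lam) :
    IntegrableOn
      (fun y => y ^ (2 * n - 3) * (2 * y + 1) / (2 * lam * y + lam - 1) ^ (2 * n + 1))
      (Set.Ioi (0 : ℝ)) volume ∧
    (2 : ℝ) ^ (2 * n - 1) * (n : ℝ) * ((n : ℝ) - 1) * (2 * (n : ℝ) - 1) * lam ^ n *
        (lam - 1) *
        ∫ y in Set.Ioi (0 : ℝ),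
          y ^ (2 * n - 3) * (2 * y + 1) / (2 * lam * y + lam - 1) ^ (2 * n + 1)
      = ((n : ℝ) - 1) * lam ^ (1 - (n : ℤ)) / (lam - 1) +
        lam ^ (2 - (n : ℤ)) / (lam - 1) ^ 2 := by
  
  obtain ⟨m, rfl⟩ : ∃ m, n = m + 2 := ⟨n - 2, by omega⟩
  have ha : (0:ℝ) < 2*lam := by linarith
  have hc : (0:ℝ) < lam - 1 := by linarith
  have H := aux14 m (2*lam) (lam-1) ha hc
  simp only [show 2*(m+2)-3 = 2*m+1 from by omega, show 2*(m+2)+1 = 2*m+5 from by omega,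
    show 2*(m+2)-1 = 2*m+3 from by omega, add_sub_assoc]
  refine ⟨H.1, ?_⟩
  rw [H.2]
  rw [show (1 - ((m+2:ℕ):ℤ)) = -((m+1:ℕ):ℤ) from by push_cast; ring,
    show (2 - ((m+2:ℕ):ℤ)) = -((m:ℕ):ℤ) from by push_cast; ring,
    zpow_neg, zpow_neg, zpow_natCast, zpow_natCast]
  have hl0 : lam ≠ 0 := by linarith
  have hc0 : lam - 1 ≠ 0 := ne_of_gt hc
  have h1 : (2*(m:ℝ)+2) ≠ 0 := by positivity
  have h2 : (2*(m:ℝ)+3) ≠ 0 := by positivity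
  have h3 : (2*(m:ℝ)+4) ≠ 0 := by positivity
  rw [mul_pow]
  push_cast
  field_simp
  ring
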